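/- arXiv:2405.15740 — 2 statements merged into one kernel-verified Lean document; each statement's English description precedes it below -/
import Mathlib

section
/- Unbiasedness of the FIPTIW estimating function at a fixed time point (single-time-point version of Theorem 1). Let (Ω, F, P) be a probability space, let Y : Ω → ℝ be integrable, let X : Ω → ℝ^p, W : Ω → ℝ^q, Z : Ω → ℝ^r be measurable, and let N : Ω → {0,1} be a measurable observation indicator. Let D : Ω → {0,1} be σ(X)-measurable (the treatment indicator is among the outcome-model covariates). Let π be a version of the conditional expectation E[D | σ(W)] and suppose there is ε > 0 with ε ≤ π ≤ 1 − ε almost surely; define the inverse probability of treatment weight w^IPTW = D/π + (1 − D)/(1 − π). Let γ ∈ ℝ^r, λ₀ > 0, let h : ℝ^p → ℝ be a bounded nonnegative measurable function, and suppose the map ω ↦ exp(−⟨γ, Z(ω)⟩) is bounded; define the inverse intensity weight w^IIW = h(X)·exp(−⟨γ, Z⟩). Assume: (i) E[N | σ(X) ⊔ σ(W) ⊔ σ(Z) ⊔ σ(Y)] = λ₀·exp(⟨γ, Z⟩) almost surely (independent sampling with correctly specified intensity at the given time point); (ii) E[Y | σ(X) ⊔ σ(W)] = E[Y | σ(X)]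 almost surely. Let μ be a version of E[Y | σ(X)]. Then for every bounded σ(X)-measurable φ : Ω → ℝ, E[ φ · (Y − μ) · w^IPTW · w^IIW · N ] = 0. -/
open MeasureTheory

private lemma abs_mul4_le {a b c d A B C D : ℝ}
    (ha : |a| ≤ A) (hb : |b| ≤ B) (hc : |c| ≤ C) (hd : |d| ≤ D) :
    |a * b * (c * d)| ≤ A * B * (C * D) := by
  have hA : (0:ℝ) ≤ A := (abs_nonneg a).trans ha
  have hB : (0:ℝ) ≤ B := (abs_nonneg b).trans hb
  have hC : (0:ℝ) ≤ C := (abs_nonneg c).trans hc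
  have hD : (0:ℝ) ≤ D := (abs_nonneg d).trans hd
  calc |a * b * (c * d)| = |a| * |b| * (|c| * |d|) := by rw [abs_mul, abs_mul, abs_mul]
    _ ≤ A * B * (C * D) :=
      mul_le_mul (mul_le_mul ha hb (abs_nonneg b) hA)
        (mul_le_mul hc hd (abs_nonneg d) hC) (by positivity) (by positivity)

private lemma abs_mul3_le {a b c A B C : ℝ}
    (ha : |a| ≤ A) (hb : |b| ≤ B) (hc : |c| ≤ C) :
    |a * b * c| ≤ A * B * C := by
  have hA : (0:ℝ) ≤ A := (abs_nonneg a).trans ha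
  have hB : (0:ℝ) ≤ B := (abs_nonneg b).trans hb
  calc |a * b * c| = |a| * |b| * |c| := by rw [abs_mul, abs_mul]
    _ ≤ A * B * C :=
      mul_le_mul (mul_le_mul ha hb (abs_nonneg b) hA) hc (abs_nonneg c) (mul_nonneg hA hB)

/-- Unbiasedness of the FIPTIW estimating function at a fixed time point
(single-time-point version of Theorem 1 of the paper). -/
theorem fiptiw_estimating_function_unbiased
    {Ω : Type*} [MeasurableSpace Ω] (P : Measure Ω) [IsProbabilityMeasure P]
    {p q r : ℕ}
    (Y : Ω → ℝ) (hYmeas : Measurable Y) (hYint : Integrable Y P)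
    (X : Ω → Fin p → ℝ) (hX : Measurable X)
    (W : Ω → Fin q → ℝ) (hW : Measurable W)
    (Z : Ω → Fin r → ℝ) (hZ : Measurable Z)
    (N : Ω → ℝ) (hN : Measurable N) (hNval : ∀ ω, N ω = 0 ∨ N ω = 1)
    (D : Ω → ℝ) (hD : Measurable[MeasurableSpace.comap X inferInstance] D)
    (hDval : ∀ ω, D ω = 0 ∨ D ω = 1)
    (π : Ω → ℝ) (hπ : π =ᵐ[P] P[D | MeasurableSpace.comap W inferInstance])
    (ε : ℝ) (hε : 0 < ε) (hπbdd : ∀ᵐ ω ∂P, ε ≤ π ω ∧ π ω ≤ 1 - ε)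
    (γ : Fin r → ℝ) (lam0 : ℝ) (hlam0 : 0 < lam0)
    (h : (Fin p → ℝ) → ℝ) (hhmeas : Measurable h) (hhnonneg : ∀ x, 0 ≤ h x)
    (hhbdd : ∃ Ch : ℝ, ∀ x, h x ≤ Ch)
    (hexpbdd : ∃ Ce : ℝ, ∀ ω, Real.exp (-(∑ i, γ i * Z ω i)) ≤ Ce)
    -- (i) independent sampling with correctly specified intensity at this time point
    (hintensity : P[N | MeasurableSpace.comap X inferInstance ⊔ MeasurableSpace.comap W inferInstance
          ⊔ MeasurableSpace.comap Z inferInstance ⊔ MeasurableSpace.comap Y inferInstance]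
        =ᵐ[P] fun ω => lam0 * Real.exp (∑ i, γ i * Z ω i))
    -- (ii) conditional mean independence of the outcome from the treatment-model covariates
    (hmeanind : P[Y | MeasurableSpace.comap X inferInstance ⊔ MeasurableSpace.comap W inferInstance]
        =ᵐ[P] P[Y | MeasurableSpace.comap X inferInstance])
    (μ : Ω → ℝ) (hμ : μ =ᵐ[P] P[Y | MeasurableSpace.comap X inferInstance]) :
    ∀ φ : Ω → ℝ, Measurable[MeasurableSpace.comap X inferInstance] φ →
      (∃ Cφ : ℝ, ∀ ω, |φ ω| ≤ Cφ) →
      ∫ ω, φ ω * (Y ω - μ ω) * (D ω / π ω + (1 - D ω) / (1 - π ω)) *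
        (h (X ω) * Real.exp (-(∑ i, γ i * Z ω i))) * N ω ∂P = 0 := by
  rintro φ hφmeas ⟨Cφ, hφbdd⟩
  obtain ⟨Ch, hCh⟩ := hhbdd
  obtain ⟨Ce, hCe⟩ := hexpbdd
  set mX := MeasurableSpace.comap X (inferInstance : MeasurableSpace (Fin p → ℝ)) with hmXd
  set mW := MeasurableSpace.comap W (inferInstance : MeasurableSpace (Fin q → ℝ)) with hmWd
  set mZ := MeasurableSpace.comap Z (inferInstance : MeasurableSpace (Fin r → ℝ)) with hmZd
  set mY := MeasurableSpace.comap Y (inferInstance : MeasurableSpace ℝ) with hmYd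
  set mH := mX ⊔ mW with hmHd
  set mG := mH ⊔ mZ ⊔ mY with hmGd
  have hmXle : mX ≤ _ := hX.comap_le
  have hmWle : mW ≤ _ := hW.comap_le
  have hmZle : mZ ≤ _ := hZ.comap_le
  have hmYle : mY ≤ _ := hYmeas.comap_le
  have hmHle : mH ≤ _ := sup_le hmXle hmWle
  have hmGle : mG ≤ _ := sup_le (sup_le hmHle hmZle) hmYle
  have hmXH : mX ≤ mH := le_sup_left
  have hmHG : mH ≤ mG := le_sup_of_le_left le_sup_left
  have hmZG : mZ ≤ mG := le_sup_of_le_left le_sup_right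
  have hmYG : mY ≤ mG := le_sup_right
  have hmXG : mX ≤ mG := hmXH.trans hmHG
  set μ' := P[Y | mX] with hμ'd
  set π' := P[D | mW] with hπ'd
  have hμ'sm : StronglyMeasurable[mX] μ' := stronglyMeasurable_condExp
  have hπ'sm : StronglyMeasurable[mW] π' := stronglyMeasurable_condExp
  have hμ'int : Integrable μ' P := integrable_condExp
  set w : Ω → ℝ := fun ω => D ω / π' ω + (1 - D ω) / (1 - π' ω) with hwd
  set e : Ω → ℝ := fun ω => Real.exp (-(∑ i, γ i * Z ω i)) with hed
  set B : Ω → ℝ := fun ω => φ ω * w ω * (h (X ω) * e ω) with hBd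
  set g : Ω → ℝ := fun ω => B ω * (Y ω - μ' ω) with hgd
  set k : Ω → ℝ := fun ω => φ ω * w ω * h (X ω) with hkd
  -- measurability
  have hXmX : Measurable[mX] X := Measurable.of_comap_le le_rfl
  have hZmZ : Measurable[mZ] Z := Measurable.of_comap_le le_rfl
  have hYmY : Measurable[mY] Y := Measurable.of_comap_le le_rfl
  have hem : Measurable[mZ] e := by
    rw [hed]
    exact Real.measurable_exp.comp
      ((Finset.measurable_sum _ fun i _ =>
        measurable_const.mul ((measurable_pi_apply i).comp hZmZ)).neg)
  have hwm : Measurable[mH] w := by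
    have hDm : Measurable[mH] D := hD.mono hmXH le_rfl
    have hπm : Measurable[mH] π' := hπ'sm.measurable.mono le_sup_right le_rfl
    rw [hwd]
    exact (hDm.div hπm).add ((measurable_const.sub hDm).div (measurable_const.sub hπm))
  have hhXm : Measurable[mX] fun ω => h (X ω) := hhmeas.comp hXmX
  have hBmG : Measurable[mG] B := by
    rw [hBd]
    exact ((hφmeas.mono hmXG le_rfl).mul (hwm.mono hmHG le_rfl)).mul
      ((hhXm.mono hmXG le_rfl).mul (hem.mono hmZG le_rfl))
  have hgsm : StronglyMeasurable[mG] g := by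
    rw [hgd]
    exact (hBmG.mul ((hYmY.mono hmYG le_rfl).sub
      (hμ'sm.measurable.mono hmXG le_rfl))).stronglyMeasurable
  have hksm : StronglyMeasurable[mH] k := by
    rw [hkd]
    exact (((hφmeas.mono hmXH le_rfl).mul hwm).mul (hhXm.mono hmXH le_rfl)).stronglyMeasurable
  -- bounds
  have hDbd : ∀ ω, 0 ≤ D ω ∧ D ω ≤ 1 := fun ω => by
    rcases hDval ω with h' | h' <;> rw [h'] <;> norm_num
  have hNbd : ∀ ω, |N ω| ≤ 1 := fun ω => by
    rcases hNval ω with h' | h' <;> rw [h'] <;> norm_num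
  have hφabs : ∀ ω, |φ ω| ≤ |Cφ| := fun ω => (hφbdd ω).trans (le_abs_self _)
  have hhabs : ∀ ω, |h (X ω)| ≤ |Ch| := fun ω => by
    rw [abs_of_nonneg (hhnonneg _)]; exact (hCh _).trans (le_abs_self _)
  have heabs : ∀ ω, |e ω| ≤ |Ce| := fun ω => by
    rw [hed]
    simp only
    rw [abs_of_nonneg (Real.exp_pos _).le]
    exact (hCe _).trans (le_abs_self _)
  have hπ'bdd : ∀ᵐ ω ∂P, ε ≤ π' ω ∧ π' ω ≤ 1 - ε := by
    filter_upwards [hπbdd, hπ] with ω h1 h2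
    rw [← h2]; exact h1
  have hwbdd : ∀ᵐ ω ∂P, |w ω| ≤ 2 / ε := by
    filter_upwards [hπ'bdd] with ω h1
    obtain ⟨h1a, h1b⟩ := h1
    obtain ⟨hD0, hD1⟩ := hDbd ω
    have hπpos : 0 < π' ω := lt_of_lt_of_le hε h1a
    have t1 : D ω / π' ω ≤ 1 / ε := div_le_div₀ (by norm_num) hD1 hε h1a
    have t2 : (1 - D ω) / (1 - π' ω) ≤ 1 / ε :=
      div_le_div₀ (by norm_num) (by linarith) hε (by linarith)
    have t3 : 0 ≤ D ω / π' ω := div_nonneg hD0 hπpos.le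
    have t4 : 0 ≤ (1 - D ω) / (1 - π' ω) := div_nonneg (by linarith) (by linarith)
    rw [hwd]
    simp only
    rw [abs_of_nonneg (by linarith)]
    have : 2 / ε = 1 / ε + 1 / ε := by ring
    linarith
  -- integrability
  have hYμ'int : Integrable (fun ω => Y ω - μ' ω) P := hYint.sub hμ'int
  have hNint : Integrable N P := by
    have := (integrable_const (1:ℝ) (μ := P)).bdd_mul (c := 1) hN.aestronglyMeasurable
      (Filter.Eventually.of_forall fun ω => by simpa [Real.norm_eq_abs] using hNbd ω)
    exact this.congr (Filter.Eventually.of_forall fun ω => mul_one _)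
  have hgint : Integrable g P := by
    rw [hgd]
    refine hYμ'int.bdd_mul (c := |Cφ| * (2 / ε) * (|Ch| * |Ce|))
      (hBmG.mono hmGle le_rfl).aestronglyMeasurable ?_
    filter_upwards [hwbdd] with ω hw
    rw [hBd]
    simp only [Real.norm_eq_abs]
    exact abs_mul4_le (hφabs ω) hw (hhabs ω) (heabs ω)
  have hgNint : Integrable (fun ω => g ω * N ω) P := by
    have : Integrable (fun ω => (B ω * N ω) * (Y ω - μ' ω)) P := by
      refine hYμ'int.bdd_mul (c := |Cφ| * (2 / ε) * (|Ch| * |Ce|) * 1)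
        (((hBmG.mono hmGle le_rfl).mul hN)).aestronglyMeasurable ?_
      filter_upwards [hwbdd] with ω hw
      rw [Real.norm_eq_abs, abs_mul]
      refine mul_le_mul ?_ (hNbd ω) (abs_nonneg _) (by positivity)
      rw [hBd]
      simp only
      exact abs_mul4_le (hφabs ω) hw (hhabs ω) (heabs ω)
    exact this.congr (Filter.Eventually.of_forall fun ω => by rw [hgd]; ring)
  have hkint : Integrable (fun ω => k ω * (Y ω - μ' ω)) P := by
    refine hYμ'int.bdd_mul (c := |Cφ| * (2 / ε) * |Ch|)
      (hksm.mono hmHle).measurable.aestronglyMeasurable ?_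
    filter_upwards [hwbdd] with ω hw
    rw [Real.norm_eq_abs, hkd]
    exact abs_mul3_le (hφabs ω) hw (hhabs ω)
  -- Step 0 : replace μ, π by their conditional-expectation versions
  have step0 : ∫ ω, φ ω * (Y ω - μ ω) * (D ω / π ω + (1 - D ω) / (1 - π ω)) *
      (h (X ω) * Real.exp (-(∑ i, γ i * Z ω i))) * N ω ∂P = ∫ ω, g ω * N ω ∂P := by
    refine integral_congr_ae ?_
    filter_upwards [hμ, hπ] with ω h1 h2
    rw [h1, h2]
    simp only [hgd, hBd, hwd, hed]
    ring
  -- Step A : condition on mG and use the intensity assumption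
  have stepA : ∫ ω, g ω * N ω ∂P
      = ∫ ω, g ω * (lam0 * Real.exp (∑ i, γ i * Z ω i)) ∂P := by
    have hpull : P[fun ω => g ω * N ω|mG] =ᵐ[P] fun ω => g ω * (P[N|mG]) ω :=
      condExp_mul_of_stronglyMeasurable_left hgsm hgNint hNint
    calc ∫ ω, g ω * N ω ∂P = ∫ ω, (P[fun ω => g ω * N ω|mG]) ω ∂P :=
          (integral_condExp hmGle).symm
      _ = ∫ ω, g ω * (lam0 * Real.exp (∑ i, γ i * Z ω i)) ∂P := by
          refine integral_congr_ae ?_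
          filter_upwards [hpull, hintensity] with ω h1 h2
          rw [h1, h2]
  -- Step B : cancel the exponentials
  have stepB : ∫ ω, g ω * (lam0 * Real.exp (∑ i, γ i * Z ω i)) ∂P
      = lam0 * ∫ ω, k ω * (Y ω - μ' ω) ∂P := by
    rw [← integral_const_mul]
    refine integral_congr_ae (Filter.Eventually.of_forall fun ω => ?_)
    have hne : Real.exp (∑ i, γ i * Z ω i) ≠ 0 := (Real.exp_pos _).ne'
    simp only [hgd, hBd, hed, hkd]
    rw [Real.exp_neg]
    field_simp
  -- Step C : condition on mH and use conditional mean independence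
  have hcond0 : P[fun ω => Y ω - μ' ω|mH] =ᵐ[P] fun _ => (0:ℝ) := by
    have h1 : P[Y - μ'|mH] =ᵐ[P] P[Y|mH] - P[μ'|mH] := condExp_sub hYint hμ'int _
    have h2 : P[μ'|mH] = μ' :=
      condExp_of_stronglyMeasurable hmHle (hμ'sm.mono hmXH) hμ'int
    have h3 : (P[Y|mH] - P[μ'|mH] : Ω → ℝ) =ᵐ[P] fun _ => (0:ℝ) := by
      rw [h2]
      filter_upwards [hmeanind] with ω hω
      simp [Pi.sub_apply, hω]
    exact h1.trans h3
  have stepC : ∫ ω, k ω * (Y ω - μ' ω) ∂P = 0 := by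
    have e2 : P[fun ω => k ω * (Y ω - μ' ω)|mH] =ᵐ[P] fun _ => (0:ℝ) := by
      have h1 := condExp_mul_of_stronglyMeasurable_left hksm hkint hYμ'int
      refine h1.trans ?_
      filter_upwards [hcond0] with ω hω
      simp [Pi.mul_apply, hω]
    calc ∫ ω, k ω * (Y ω - μ' ω) ∂P
        = ∫ ω, (P[fun ω => k ω * (Y ω - μ' ω)|mH]) ω ∂P := (integral_condExp hmHle).symm
      _ = ∫ _ω, (0:ℝ) ∂P := integral_congr_ae e2
      _ = 0 := integral_zero _ _
  rw [step0, stepA, stepB, stepC, mul_zero]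
end

section
/- Unbiasedness of the inverse-intensity-weighted estimating function at a fixed time point. Let (Ω, F, P) be a probability space, let Y : Ω → ℝ be integrable, let X : Ω → ℝ^p and Z : Ω → ℝ^r be measurable, and let N : Ω → {0,1} be a measurable observation indicator. Let γ ∈ ℝ^r, λ₀ > 0, let h : ℝ^p → ℝ be bounded nonnegative measurable, and suppose ω ↦ exp(−⟨γ, Z(ω)⟩) is bounded. Assume E[N | σ(X) ⊔ σ(Z) ⊔ σ(Y)] = λ₀·exp(⟨γ, Z⟩) almost surely. Let μ be a version of E[Y | σ(X)]. Then for every bounded σ(X)-measurable φ : Ω → ℝ, E[ φ · (Y − μ) · h(X) · exp(−⟨γ, Z⟩) · N ] = 0. -/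
open MeasureTheory

private lemma iiw_pullout {Ω : Type*} {mΩ : MeasurableSpace Ω} (P : Measure Ω)
    [IsProbabilityMeasure P] {m : MeasurableSpace Ω} (hm : m ≤ mΩ)
    (f g : Ω → ℝ) (hf : StronglyMeasurable[m] f) (hg : Integrable g P)
    (hfg : Integrable (f * g) P) :
    ∫ ω, f ω * g ω ∂P = ∫ ω, f ω * (P[g|m]) ω ∂P := by
  have h1 : P[f * g|m] =ᵐ[P] f * P[g|m] := condExp_mul_of_stronglyMeasurable_left hf hfg hg
  calc ∫ ω, f ω * g ω ∂P = ∫ ω, (f * g) ω ∂P := rfl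
    _ = ∫ ω, (P[f * g|m]) ω ∂P := (integral_condExp hm).symm
    _ = ∫ ω, (f * P[g|m]) ω ∂P := integral_congr_ae h1
    _ = ∫ ω, f ω * (P[g|m]) ω ∂P := rfl

/-- Unbiasedness of the inverse-intensity-weighted (IIW) estimating function
at a fixed time point. -/
theorem iiw_estimating_function_unbiased
    {Ω : Type*} [MeasurableSpace Ω] (P : Measure Ω) [IsProbabilityMeasure P]
    {p r : ℕ}
    (Y : Ω → ℝ) (hYmeas : Measurable Y) (hYint : Integrable Y P)
    (X : Ω → Fin p → ℝ) (hX : Measurable X)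
    (Z : Ω → Fin r → ℝ) (hZ : Measurable Z)
    (N : Ω → ℝ) (hN : Measurable N) (hNval : ∀ ω, N ω = 0 ∨ N ω = 1)
    (γ : Fin r → ℝ) (lam0 : ℝ) (hlam0 : 0 < lam0)
    (h : (Fin p → ℝ) → ℝ) (hhmeas : Measurable h) (hhnonneg : ∀ x, 0 ≤ h x)
    (hhbdd : ∃ Ch : ℝ, ∀ x, h x ≤ Ch)
    (hexpbdd : ∃ Ce : ℝ, ∀ ω, Real.exp (-(∑ i, γ i * Z ω i)) ≤ Ce)
    (hintensity : P[N | MeasurableSpace.comap X inferInstance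
          ⊔ MeasurableSpace.comap Z inferInstance ⊔ MeasurableSpace.comap Y inferInstance]
        =ᵐ[P] fun ω => lam0 * Real.exp (∑ i, γ i * Z ω i))
    (μ : Ω → ℝ) (hμ : μ =ᵐ[P] P[Y | MeasurableSpace.comap X inferInstance]) :
    ∀ φ : Ω → ℝ, Measurable[MeasurableSpace.comap X inferInstance] φ →
      (∃ Cφ : ℝ, ∀ ω, |φ ω| ≤ Cφ) →
      ∫ ω, φ ω * (Y ω - μ ω) * (h (X ω) * Real.exp (-(∑ i, γ i * Z ω i))) * N ω ∂P = 0 := by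
  rintro φ hφmeas ⟨Cφ, hCφ⟩
  obtain ⟨Ch, hCh⟩ := hhbdd
  obtain ⟨Ce, hCe⟩ := hexpbdd
  have hmX : MeasurableSpace.comap X (inferInstance : MeasurableSpace (Fin p → ℝ))
      ≤ ‹MeasurableSpace Ω› := hX.comap_le
  have hmZ : MeasurableSpace.comap Z (inferInstance : MeasurableSpace (Fin r → ℝ))
      ≤ ‹MeasurableSpace Ω› := hZ.comap_le
  have hmY : MeasurableSpace.comap Y (inferInstance : MeasurableSpace ℝ)
      ≤ ‹MeasurableSpace Ω› := hYmeas.comap_le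
  set mX := MeasurableSpace.comap X (inferInstance : MeasurableSpace (Fin p → ℝ)) with hmXdef
  set mZ := MeasurableSpace.comap Z (inferInstance : MeasurableSpace (Fin r → ℝ)) with hmZdef
  set mY := MeasurableSpace.comap Y (inferInstance : MeasurableSpace ℝ) with hmYdef
  set m := mX ⊔ mZ ⊔ mY with hmdef
  have hm := sup_le (sup_le hmX hmZ) hmY
  set μ' : Ω → ℝ := P[Y|mX] with hμ'def
  set e : Ω → ℝ := fun ω => Real.exp (-(∑ i, γ i * Z ω i)) with hedef
  -- measurability facts
  have hXmX : Measurable[mX] X := Measurable.of_comap_le le_rfl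
  have hZmZ : Measurable[mZ] Z := Measurable.of_comap_le le_rfl
  have hYmY : Measurable[mY] Y := Measurable.of_comap_le le_rfl
  have hφm : Measurable[m] φ := hφmeas.mono (le_trans le_sup_left le_sup_left) le_rfl
  have hhXmX : Measurable[mX] fun ω => h (X ω) := hhmeas.comp hXmX
  have hhXm : Measurable[m] fun ω => h (X ω) :=
    hhXmX.mono (le_trans le_sup_left le_sup_left) le_rfl
  have hsmZ : Measurable[mZ] fun ω => ∑ i, γ i * Z ω i := by
    apply Finset.measurable_sum
    intro i _
    exact ((measurable_pi_apply i).comp hZmZ).const_mul (γ i)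
  have hemZ : Measurable[mZ] e := Real.measurable_exp.comp hsmZ.neg
  have hem : Measurable[m] e := hemZ.mono (le_trans le_sup_right le_sup_left) le_rfl
  have hYm : Measurable[m] Y := hYmY.mono le_sup_right le_rfl
  have hμ'sm : StronglyMeasurable[mX] μ' := stronglyMeasurable_condExp
  have hμ'm : Measurable[m] μ' :=
    hμ'sm.measurable.mono (le_trans le_sup_left le_sup_left) le_rfl
  have hμ'int : Integrable μ' P := integrable_condExp
  have hYsub : Integrable (fun ω => Y ω - μ' ω) P := hYint.sub hμ'int
  -- pointwise bounds
  have hbd : ∀ (ω : Ω) (c : ℝ), |c| ≤ 1 →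
      |φ ω * (Y ω - μ' ω) * (h (X ω) * e ω) * c| ≤ Cφ * Ch * Ce * |Y ω - μ' ω| := by
    intro ω c hc
    have h1 : |φ ω| ≤ Cφ := hCφ ω
    have h2 : |h (X ω)| ≤ Ch := by rw [abs_of_nonneg (hhnonneg _)]; exact hCh _
    have h3 : |e ω| ≤ Ce := by
      rw [hedef, abs_of_nonneg (Real.exp_nonneg _)]; exact hCe ω
    have hCφ0 : (0:ℝ) ≤ Cφ := (abs_nonneg _).trans h1
    have hCh0 : (0:ℝ) ≤ Ch := (abs_nonneg _).trans h2
    have hCe0 : (0:ℝ) ≤ Ce := (abs_nonneg _).trans h3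
    have h20 : (0:ℝ) ≤ |h (X ω)| := abs_nonneg _
    have h30 : (0:ℝ) ≤ |e ω| := abs_nonneg _
    have h50 : (0:ℝ) ≤ |Y ω - μ' ω| := abs_nonneg _
    have e1 : |φ ω| * (|h (X ω)| * |e ω|) * |c| ≤ Cφ * (Ch * Ce) * 1 :=
      mul_le_mul (mul_le_mul h1 (mul_le_mul h2 h3 h30 hCh0) (mul_nonneg h20 h30) hCφ0)
        hc (abs_nonneg _) (mul_nonneg hCφ0 (mul_nonneg hCh0 hCe0))
    calc |φ ω * (Y ω - μ' ω) * (h (X ω) * e ω) * c|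
        = (|φ ω| * (|h (X ω)| * |e ω|) * |c|) * |Y ω - μ' ω| := by
          simp only [abs_mul]; ring
      _ ≤ (Cφ * (Ch * Ce) * 1) * |Y ω - μ' ω| := mul_le_mul_of_nonneg_right e1 h50
      _ = Cφ * Ch * Ce * |Y ω - μ' ω| := by ring
  have hNbd : ∀ ω, |N ω| ≤ 1 := by
    intro ω; rcases hNval ω with h0 | h0 <;> simp [h0]
  -- F and its properties
  set F : Ω → ℝ := fun ω => φ ω * (Y ω - μ' ω) * (h (X ω) * e ω) with hFdef
  have hFm : Measurable[m] F := (hφm.mul (hYm.sub hμ'm)).mul (hhXm.mul hem)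
  have hFNint : Integrable (F * N) P := by
    apply Integrable.mono' ((hYsub.abs).const_mul (Cφ * Ch * Ce))
    · exact ((hFm.mono hm le_rfl).mul hN).aestronglyMeasurable
    · exact Filter.Eventually.of_forall fun ω => by
        simpa [Real.norm_eq_abs, hFdef, abs_mul] using hbd ω (N ω) (hNbd ω)
  have hNint : Integrable N P := by
    apply Integrable.mono' (integrable_const (1:ℝ)) hN.aestronglyMeasurable
    exact Filter.Eventually.of_forall fun ω => by simpa [Real.norm_eq_abs] using hNbd ω
  -- exp cancellation
  have hcancel : ∀ ω, e ω * Real.exp (∑ i, γ i * Z ω i) = 1 := by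
    intro ω; rw [hedef, ← Real.exp_add]; simp
  -- main computation
  have step1 : ∫ ω, φ ω * (Y ω - μ ω) * (h (X ω) * e ω) * N ω ∂P
      = ∫ ω, F ω * N ω ∂P := by
    apply integral_congr_ae
    filter_upwards [hμ] with ω hω
    rw [hω]
  have step2 : ∫ ω, F ω * N ω ∂P = ∫ ω, F ω * (P[N|m]) ω ∂P :=
    iiw_pullout P hm F N hFm.stronglyMeasurable hNint hFNint
  have step3 : ∫ ω, F ω * (P[N|m]) ω ∂P
      = ∫ ω, lam0 * ((φ ω * h (X ω)) * (Y ω - μ' ω)) ∂P := by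
    apply integral_congr_ae
    filter_upwards [hintensity] with ω hω
    rw [hω, hFdef]
    calc φ ω * (Y ω - μ' ω) * (h (X ω) * e ω) * (lam0 * Real.exp (∑ i, γ i * Z ω i))
        = lam0 * ((φ ω * h (X ω)) * (Y ω - μ' ω)) * (e ω * Real.exp (∑ i, γ i * Z ω i)) := by
          ring
      _ = lam0 * ((φ ω * h (X ω)) * (Y ω - μ' ω)) := by rw [hcancel ω, mul_one]
  have hGint : Integrable ((fun ω => φ ω * h (X ω)) * (fun ω => Y ω - μ' ω)) P := by
    apply Integrable.mono' ((hYsub.abs).const_mul (Cφ * Ch))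
    · exact (((hφm.mul hhXm).mul (hYm.sub hμ'm)).mono hm le_rfl).aestronglyMeasurable
    · apply Filter.Eventually.of_forall
      intro ω
      have h1 : |φ ω| ≤ Cφ := hCφ ω
      have h2 : |h (X ω)| ≤ Ch := by rw [abs_of_nonneg (hhnonneg _)]; exact hCh _
      have hCφ0 : (0:ℝ) ≤ Cφ := (abs_nonneg _).trans h1
      calc ‖φ ω * h (X ω) * (Y ω - μ' ω)‖
          = |φ ω| * |h (X ω)| * |Y ω - μ' ω| := by
            rw [Real.norm_eq_abs, abs_mul, abs_mul]
        _ ≤ Cφ * Ch * |Y ω - μ' ω| :=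
            mul_le_mul_of_nonneg_right
              (mul_le_mul h1 h2 (abs_nonneg _) hCφ0) (abs_nonneg _)
  have step4 : ∫ ω, (φ ω * h (X ω)) * (Y ω - μ' ω) ∂P = 0 := by
    have hpull := iiw_pullout P hmX (fun ω => φ ω * h (X ω)) (fun ω => Y ω - μ' ω)
      (hφmeas.mul hhXmX).stronglyMeasurable hYsub hGint
    rw [hpull]
    have hzero : P[fun ω => Y ω - μ' ω|mX] =ᵐ[P] 0 := by
      have h1 : P[Y - μ'|mX] =ᵐ[P] P[Y|mX] - P[μ'|mX] := condExp_sub hYint hμ'int mX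
      have h2 : P[μ'|mX] = μ' := condExp_of_stronglyMeasurable hmX hμ'sm hμ'int
      filter_upwards [h1] with ω hω
      have : (fun ω => Y ω - μ' ω) = Y - μ' := rfl
      rw [this, hω]
      simp only [Pi.sub_apply, Pi.zero_apply, h2]
      simp only [hμ'def]
      ring
    calc ∫ ω, (φ ω * h (X ω)) * (P[fun ω => Y ω - μ' ω|mX]) ω ∂P
        = ∫ ω, (0:ℝ) ∂P := by
          apply integral_congr_ae
          filter_upwards [hzero] with ω hω
          rw [hω]; simp
      _ = 0 := integral_zero _ _
  rw [step1, step2, step3, integral_const_mul, step4, mul_zero]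
end
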